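/- Let A be a commutative integral domain with quotient field K. Suppose K* stabilizes the plant G = [[G₁₁, G₁₂],[G₂₁, G₂₂]] (i.e., the nine closed-loop transfer matrices Θ(G,K*) all have entries in A). Set U* = (I - G₂₂K*)⁻¹, V* = K*U*. If Q is any matrix over K such that the 3×3 block matrix [G₁₂; I; G₂₂] Q [G₂₁, G₂₂, I] has all entries in A and det(U* + G₂₂Q) ≠ 0, then K := (V* + Q)(U* + G₂₂Q)⁻¹ also stabilizes G, i.e., Θ(G,K) has all entries in A. -/
import Mathlib


open Matrix

/-- A matrix over the fraction field of `R` is *stable* if all its entries lie in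
the image of `R`. -/
def stableMat (R : Type*) [CommRing R] {a b : Type*}
    (M : Matrix a b (FractionRing R)) : Prop :=
  ∀ i j, M i j ∈ Set.range (algebraMap R (FractionRing R))

/-- All nine block entries of the closed-loop transfer matrix `Θ(G,K)` are
stable, where `U = (I - G₂₂ K)⁻¹` and `V = K U`. -/
def ThetaStable (R : Type*) [CommRing R] [IsDomain R]
    {nW nZ nY nU : Type*} [Fintype nY] [Fintype nU] [DecidableEq nY] [DecidableEq nU]
    (G₁₁ : Matrix nZ nW (FractionRing R)) (G₁₂ : Matrix nZ nU (FractionRing R))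
    (G₂₁ : Matrix nY nW (FractionRing R)) (G₂₂ : Matrix nY nU (FractionRing R))
    (K : Matrix nU nY (FractionRing R)) : Prop :=
  stableMat R (G₁₁ + G₁₂ * (K * (1 - G₂₂ * K)⁻¹) * G₂₁) ∧
  stableMat R (G₁₂ + G₁₂ * (K * (1 - G₂₂ * K)⁻¹) * G₂₂) ∧
  stableMat R (G₁₂ * (K * (1 - G₂₂ * K)⁻¹)) ∧
  stableMat R ((K * (1 - G₂₂ * K)⁻¹) * G₂₁) ∧
  stableMat R (1 + (K * (1 - G₂₂ * K)⁻¹) * G₂₂) ∧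
  stableMat R (K * (1 - G₂₂ * K)⁻¹) ∧
  stableMat R ((1 - G₂₂ * K)⁻¹ * G₂₁) ∧
  stableMat R ((1 - G₂₂ * K)⁻¹ * G₂₂) ∧
  stableMat R ((1 - G₂₂ * K)⁻¹)

lemma stableMat_add {R : Type*} [CommRing R] {a b : Type*}
    {M N : Matrix a b (FractionRing R)} (hM : stableMat R M) (hN : stableMat R N) :
    stableMat R (M + N) := by
  intro i j
  obtain ⟨m, hm⟩ := hM i j
  obtain ⟨n, hn⟩ := hN i j
  exact ⟨m + n, by simp [Matrix.add_apply, hm, hn]⟩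

/-- Parametrization of stabilizing controllers in terms of one stabilizing
controller `K*`: if `Q` makes all nine entries of `[G₁₂; I; G₂₂] Q [G₂₁, G₂₂, I]`
stable and `det (U* + G₂₂ Q) ≠ 0`, then `K = (V* + Q)(U* + G₂₂ Q)⁻¹` also
stabilizes `G`. -/
theorem parametrization_stabilizing_controllers {R : Type*} [CommRing R] [IsDomain R]
    {nW nZ nY nU : Type*} [Fintype nY] [Fintype nU] [DecidableEq nY] [DecidableEq nU]
    (G₁₁ : Matrix nZ nW (FractionRing R)) (G₁₂ : Matrix nZ nU (FractionRing R))
    (G₂₁ : Matrix nY nW (FractionRing R)) (G₂₂ : Matrix nY nU (FractionRing R))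
    (Ks : Matrix nU nY (FractionRing R))
    (hdets : (1 - G₂₂ * Ks).det ≠ 0)
    (hstab : ThetaStable R G₁₁ G₁₂ G₂₁ G₂₂ Ks)
    (Q : Matrix nU nY (FractionRing R))
    (hQ : stableMat R (G₁₂ * Q * G₂₁) ∧ stableMat R (G₁₂ * Q * G₂₂) ∧
      stableMat R (G₁₂ * Q) ∧ stableMat R (Q * G₂₁) ∧ stableMat R (Q * G₂₂) ∧
      stableMat R Q ∧ stableMat R (G₂₂ * Q * G₂₁) ∧
      stableMat R (G₂₂ * Q * G₂₂) ∧ stableMat R (G₂₂ * Q))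
    (hdetQ : ((1 - G₂₂ * Ks)⁻¹ + G₂₂ * Q).det ≠ 0) :
    (1 - G₂₂ * ((Ks * (1 - G₂₂ * Ks)⁻¹ + Q) *
        ((1 - G₂₂ * Ks)⁻¹ + G₂₂ * Q)⁻¹)).det ≠ 0 ∧
    ThetaStable R G₁₁ G₁₂ G₂₁ G₂₂
      ((Ks * (1 - G₂₂ * Ks)⁻¹ + Q) * ((1 - G₂₂ * Ks)⁻¹ + G₂₂ * Q)⁻¹) := by
  set Us : Matrix nY nY (FractionRing R) := (1 - G₂₂ * Ks)⁻¹ with hUs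
  set W : Matrix nY nY (FractionRing R) := Us + G₂₂ * Q with hWdef
  set K : Matrix nU nY (FractionRing R) := (Ks * Us + Q) * W⁻¹ with hKdef
  have hsunit : IsUnit (1 - G₂₂ * Ks).det := isUnit_iff_ne_zero.mpr hdets
  have hWunit : IsUnit W.det := isUnit_iff_ne_zero.mpr hdetQ
  have hUmul : (1 - G₂₂ * Ks) * Us = 1 := Matrix.mul_nonsing_inv _ hsunit
  have hWW : W * W⁻¹ = 1 := Matrix.mul_nonsing_inv _ hWunit
  have hWW' : W⁻¹ * W = 1 := Matrix.nonsing_inv_mul _ hWunit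
  -- key identity : W - G₂₂ (V* + Q) = 1
  have key : W - G₂₂ * (Ks * Us + Q) = 1 := by
    rw [hWdef]
    calc Us + G₂₂ * Q - G₂₂ * (Ks * Us + Q)
        = (1 - G₂₂ * Ks) * Us := by
          rw [Matrix.mul_add, Matrix.sub_mul, Matrix.one_mul, Matrix.mul_assoc]
          abel
      _ = 1 := hUmul
  have hK : 1 - G₂₂ * K = W⁻¹ := by
    rw [hKdef, ← Matrix.mul_assoc, ← hWW, ← Matrix.sub_mul, key, Matrix.one_mul]
  have hU : (1 - G₂₂ * K)⁻¹ = W := by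
    rw [hK, Matrix.nonsing_inv_nonsing_inv _ hWunit]
  have hV : K * (1 - G₂₂ * K)⁻¹ = Ks * Us + Q := by
    rw [hU, hKdef, Matrix.mul_assoc, hWW', Matrix.mul_one]
  have hdetW : (W⁻¹).det ≠ 0 := by
    have h1 : W.det * (W⁻¹).det = 1 := by rw [← Matrix.det_mul, hWW, Matrix.det_one]
    intro h; rw [h, mul_zero] at h1; exact zero_ne_one h1
  obtain ⟨h1, h2, h3, h4, h5, h6, h7, h8, h9⟩ := hstab
  obtain ⟨q1, q2, q3, q4, q5, q6, q7, q8, q9⟩ := hQ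
  refine ⟨by rw [hK]; exact hdetW, ?_, ?_, ?_, ?_, ?_, ?_, ?_, ?_, ?_⟩
  · rw [hV]
    have e : G₁₁ + G₁₂ * (Ks * Us + Q) * G₂₁
        = (G₁₁ + G₁₂ * (Ks * Us) * G₂₁) + G₁₂ * Q * G₂₁ := by
      rw [Matrix.mul_add, Matrix.add_mul]; abel
    rw [e]; exact stableMat_add h1 q1
  · rw [hV]
    have e : G₁₂ + G₁₂ * (Ks * Us + Q) * G₂₂
        = (G₁₂ + G₁₂ * (Ks * Us) * G₂₂) + G₁₂ * Q * G₂₂ := by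
      rw [Matrix.mul_add, Matrix.add_mul]; abel
    rw [e]; exact stableMat_add h2 q2
  · rw [hV, Matrix.mul_add]; exact stableMat_add h3 q3
  · rw [hV, Matrix.add_mul]; exact stableMat_add h4 q4
  · rw [hV]
    have e : 1 + (Ks * Us + Q) * G₂₂ = (1 + (Ks * Us) * G₂₂) + Q * G₂₂ := by
      rw [Matrix.add_mul]; abel
    rw [e]; exact stableMat_add h5 q5
  · rw [hV]; exact stableMat_add h6 q6
  · rw [hU, hWdef, Matrix.add_mul]; exact stableMat_add h7 q7
  · rw [hU, hWdef, Matrix.add_mul]; exact stableMat_add h8 q8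
  · rw [hU, hWdef]; exact stableMat_add h9 q9
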